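/- Second Kummer's Test (divergence part): Let (a_n) be positive. If there is a sequence of positive reals (p_n) with ∑_k 1/(2^k · p_{2^k}) divergent, and for all sufficiently large n, p_n·(a_n/a_{2n}) − 2p_{2n} < 0, then ∑ a_n diverges. -/

import Mathlib

open Filter Topology

theorem second_kummer_divergence (a p : ℕ → ℝ)
    (ha : ∀ n, 1 ≤ n → 0 < a n) (hp : ∀ n, 1 ≤ n → 0 < p n)
    (hdiv : ¬ Summable (fun k : ℕ => 1 / (2 ^ k * p (2 ^ k))))
    (h : ∃ N : ℕ, ∀ n ≥ N, p n * (a n / a (2 * n)) < 2 * p (2 * n)) :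
    ¬ Summable a := by
  intro hs
  obtain ⟨N, hN⟩ := h
  apply hdiv
  have h2k : ∀ k : ℕ, (1:ℕ) ≤ 2 ^ k := fun k => Nat.one_le_two_pow
  have hpk : ∀ k : ℕ, 0 < p (2 ^ k) := fun k => hp _ (h2k k)
  have hak : ∀ k : ℕ, 0 < a (2 ^ k) := fun k => ha _ (h2k k)
  set b : ℕ → ℝ := fun k => 2 ^ k * p (2 ^ k) * a (2 ^ k) with hb
  have hbpos : ∀ k, 0 < b k := fun k => by
    have h2 : (0:ℝ) < 2 ^ k := by positivity
    exact mul_pos (mul_pos h2 (hpk k)) (hak k)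
  have hstep : ∀ k, N ≤ k → b k ≤ b (k + 1) := by
    intro k hk
    have hn : 2 ^ k ≥ N :=
      le_trans (le_of_lt (Nat.lt_two_pow_self (n := N))) (Nat.pow_le_pow_right (by norm_num) hk)
    have hlt := hN (2 ^ k) hn
    have h2 : 2 * 2 ^ k = 2 ^ (k + 1) := by rw [pow_succ]; ring
    rw [h2] at hlt
    have hmul : p (2 ^ k) * a (2 ^ k) < 2 * p (2 ^ (k + 1)) * a (2 ^ (k + 1)) := by
      rw [mul_div_assoc'] at hlt
      exact (div_lt_iff₀ (hak (k+1))).mp hlt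
    have hpow : (2:ℝ) ^ (k + 1) = 2 * 2 ^ k := by ring
    have h2kpos : (0:ℝ) < 2 ^ k := by positivity
    simp only [hb, hpow]
    nlinarith [mul_lt_mul_of_pos_left hmul h2kpos]
  have hmono : ∀ k, N ≤ k → b N ≤ b k := by
    intro k hk
    induction k, hk using Nat.le_induction with
    | base => exact le_refl _
    | succ n hn ih => exact le_trans ih (hstep n hn)
  have hsub : Summable (fun k => a (2 ^ k)) :=
    hs.comp_injective (Nat.pow_right_injective le_rfl)
  rw [← summable_nat_add_iff N]
  have hsum2 : Summable (fun k => (1 / b N) * a (2 ^ (k + N))) :=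
    (((summable_nat_add_iff N).mpr hsub)).mul_left _
  apply Summable.of_nonneg_of_le _ _ hsum2
  · intro k
    have := hpk (k + N)
    positivity
  · intro k
    have hx : (0:ℝ) < 2 ^ (k + N) * p (2 ^ (k + N)) := by
      have := hpk (k + N); positivity
    have hbN := hbpos N
    rw [one_div_mul_eq_div, div_le_div_iff₀ hx hbN]
    have : b N ≤ b (k + N) := hmono _ (Nat.le_add_left _ _)
    calc 1 * b N = b N := one_mul _
      _ ≤ b (k + N) := this
      _ = a (2 ^ (k + N)) * (2 ^ (k + N) * p (2 ^ (k + N))) := by simp [hb]; ring
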